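/- If A is c-inseparable in the induced subgraph G[A] (i.e., G[A] is a c-atom), then any two vertices of A are c-inseparable in the ambient graph G. Conversely, if A is a maximal c-inseparable set in G, then G[A] is a maximal c-atom of G, and vice versa: G[A] is a maximal c-atom of G if and only if A is maximal c-inseparable in G. -/

import Mathlib

variable {V : Type*}

/-- `C` separates `x` and `y` in `G`: neither endpoint is in `C` and every walk
from `x` to `y` meets `C`. -/
def Separates (G : SimpleGraph V) (C : Set V) (x y : V) : Prop :=
  x ∉ C ∧ y ∉ C ∧ ∀ p : G.Walk x y, ∃ z ∈ C, z ∈ p.support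

/-- `x` and `y` are `c`-inseparable in `G`: no clique of size at most `c` separates them. -/
def CInsep (G : SimpleGraph V) (c : ℕ) (x y : V) : Prop :=
  ∀ C : Set V, G.IsClique C → C.ncard ≤ c → ¬ Separates G C x y

/-- A set is `c`-inseparable if all its pairs of vertices are. -/
def InsepSet (G : SimpleGraph V) (c : ℕ) (A : Set V) : Prop :=
  ∀ x ∈ A, ∀ y ∈ A, CInsep G c x y

/-- Maximal `c`-inseparable set. -/
def MaxInsepSet (G : SimpleGraph V) (c : ℕ) (A : Set V) : Prop :=
  InsepSet G c A ∧ ∀ B, A ⊆ B → InsepSet G c B → B = A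

/-- `C` separates `x` and `y` within the induced subgraph `G[A]`. -/
def SeparatesWithin (G : SimpleGraph V) (A C : Set V) (x y : V) : Prop :=
  x ∈ A \ C ∧ y ∈ A \ C ∧
    ∀ p : G.Walk x y, (∀ z ∈ p.support, z ∈ A) → ∃ z ∈ C, z ∈ p.support

/-- `G[A]` is a `c`-atom: it has no clique separator of size at most `c`. -/
def AtomWithin (G : SimpleGraph V) (c : ℕ) (A : Set V) : Prop :=
  ¬ ∃ C : Set V, C ⊆ A ∧ G.IsClique C ∧ C.ncard ≤ c ∧ ∃ x y, SeparatesWithin G A C x y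

/-- `G[A]` is a maximal `c`-atom of `G`. -/
def MaxAtom (G : SimpleGraph V) (c : ℕ) (A : Set V) : Prop :=
  AtomWithin G c A ∧ ∀ B, A ⊆ B → AtomWithin G c B → B = A

/-- Separation is symmetric. -/
lemma separates_symm {G : SimpleGraph V} {C : Set V} {x y : V}
    (h : Separates G C x y) : Separates G C y x := by
  obtain ⟨hx, hy, hw⟩ := h
  refine ⟨hy, hx, fun p => ?_⟩
  obtain ⟨z, hzC, hzs⟩ := hw p.reverse
  exact ⟨z, hzC, by simpa [SimpleGraph.Walk.support_reverse] using hzs⟩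

/-- From inseparability, extract a walk avoiding a given small clique. -/
lemma cinsep_walk {G : SimpleGraph V} {c : ℕ} {x y : V}
    (h : CInsep G c x y) {T : Set V} (hT : G.IsClique T) (hTc : T.ncard ≤ c)
    (hx : x ∉ T) (hy : y ∉ T) : ∃ p : G.Walk x y, ∀ z ∈ T, z ∉ p.support := by
  have := h T hT hTc
  unfold Separates at this
  push_neg at this
  exact this hx hy

/-- A `c`-atom is a `c`-inseparable set (in the ambient graph). -/
lemma atom_insep [Fintype V] {G : SimpleGraph V} {c : ℕ} {A : Set V}
    (h : AtomWithin G c A) : InsepSet G c A := by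
  intro x hx y hy C hC hCc hsep
  obtain ⟨hxC, hyC, hw⟩ := hsep
  refine h ⟨C ∩ A, Set.inter_subset_right, hC.subset Set.inter_subset_left,
    le_trans (Set.ncard_le_ncard Set.inter_subset_left C.toFinite) hCc, x, y,
    ⟨hx, fun hc => hxC hc.1⟩, ⟨hy, fun hc => hyC hc.1⟩, fun p hp => ?_⟩
  obtain ⟨z, hzC, hzs⟩ := hw p
  exact ⟨z, ⟨hzC, hp z hzs⟩, hzs⟩

/-- A maximal `c`-inseparable set is a `c`-atom. -/
lemma maxInsep_atom [Fintype V] {G : SimpleGraph V} {c : ℕ} {A : Set V}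
    (h : MaxInsepSet G c A) : AtomWithin G c A := by
  classical
  obtain ⟨hA, hmax⟩ := h
  rintro ⟨S, hSA, hScl, hSc, x, y, ⟨hxA, hxS⟩, ⟨hyA, hyS⟩, hwalks⟩
  obtain ⟨p0, hp0⟩ := cinsep_walk (hA x hxA y hyA) hScl hSc hxS hyS
  -- By strong induction on the length of a walk from x to y avoiding S we derive False.
  have key : ∀ n (p : G.Walk x y), p.length = n → (∀ z ∈ S, z ∉ p.support) → False := by
    intro n
    induction n using Nat.strong_induction_on with
    | _ n ih =>
      intro p hlen havoid
      by_cases hall : ∀ z ∈ p.support, z ∈ A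
      · obtain ⟨z, hzS, hzp⟩ := hwalks p hall
        exact havoid z hzS hzp
      · push_neg at hall
        obtain ⟨v, hvp, hvA⟩ := hall
        -- Since A is maximal, some vertex of A is separated from v by a small clique.
        have hnotins : ¬ InsepSet G c (A ∪ {v}) := by
          intro h'
          have := hmax _ Set.subset_union_left h'
          exact hvA (this ▸ Set.mem_union_right _ rfl)
        have hsepex : ∃ a ∈ A, ∃ T : Set V, G.IsClique T ∧ T.ncard ≤ c ∧
            Separates G T a v := by
          unfold InsepSet CInsep at hnotins
          push_neg at hnotins
          obtain ⟨b1, hb1, b2, hb2, T, hTcl, hTc, hTsep⟩ := hnotins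
          rcases hb1 with hb1 | hb1 <;> rcases hb2 with hb2 | hb2
          · exact absurd hTsep (hA b1 hb1 b2 hb2 T hTcl hTc)
          · have hb2' : b2 = v := hb2
            subst hb2'
            exact ⟨b1, hb1, T, hTcl, hTc, hTsep⟩
          · have hb1' : b1 = v := hb1
            subst hb1'
            exact ⟨b2, hb2, T, hTcl, hTc, separates_symm hTsep⟩
          · exfalso
            have hb1' : b1 = v := hb1
            have hb2' : b2 = v := hb2
            subst hb1'; subst hb2'
            obtain ⟨hv1, _, hw⟩ := hTsep
            obtain ⟨z, hzT, hzs⟩ := hw SimpleGraph.Walk.nil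
            simp only [SimpleGraph.Walk.support_nil, List.mem_singleton] at hzs
            subst hzs
            exact hv1 hzT
        obtain ⟨a, haA, T, hTcl, hTc, haT, hvT, hav⟩ := hsepex
        set q1 := p.takeUntil v hvp with hq1
        set q2 := p.dropUntil v hvp with hq2
        -- q1 (from x to v) must meet T
        have ht1 : ∃ t ∈ T, t ∈ q1.support := by
          by_contra hc
          push_neg at hc
          have hxT : x ∉ T := fun hx' => hc x hx' q1.start_mem_support
          obtain ⟨w, hw⟩ := cinsep_walk (hA x hxA a haA) hTcl hTc hxT haT
          obtain ⟨z, hzT, hzs⟩ := hav (w.reverse.append q1)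
          rw [SimpleGraph.Walk.support_append, List.mem_append] at hzs
          rcases hzs with hzs | hzs
          · exact hw z hzT (by simpa [SimpleGraph.Walk.support_reverse] using hzs)
          · exact hc z hzT (List.mem_of_mem_tail hzs)
        -- q2 (from v to y) must meet T
        have ht2 : ∃ t ∈ T, t ∈ q2.support := by
          by_contra hc
          push_neg at hc
          have hyT : y ∉ T := fun hy' => hc y hy' q2.end_mem_support
          obtain ⟨w, hw⟩ := cinsep_walk (hA a haA y hyA) hTcl hTc haT hyT
          obtain ⟨z, hzT, hzs⟩ := hav (w.append q2.reverse)
          rw [SimpleGraph.Walk.support_append, List.mem_append] at hzs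
          rcases hzs with hzs | hzs
          · exact hw z hzT hzs
          · have : z ∈ q2.reverse.support := List.mem_of_mem_tail hzs
            rw [SimpleGraph.Walk.support_reverse, List.mem_reverse] at this
            exact hc z hzT this
        obtain ⟨t1, ht1T, ht1q⟩ := ht1
        obtain ⟨t2, ht2T, ht2q⟩ := ht2
        have ht1v : t1 ≠ v := fun h => hvT (h ▸ ht1T)
        have ht2v : t2 ≠ v := fun h => hvT (h ▸ ht2T)
        -- the spliced pieces
        set r1 := q1.takeUntil t1 ht1q with hr1
        set r2 := q2.dropUntil t2 ht2q with hr2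
        have hlen1 : r1.length + 1 ≤ q1.length := by
          have hspec := congrArg SimpleGraph.Walk.length (q1.take_spec ht1q)
          rw [SimpleGraph.Walk.length_append, ← hr1] at hspec
          have : (q1.dropUntil t1 ht1q).length ≠ 0 :=
            fun h => ht1v (SimpleGraph.Walk.eq_of_length_eq_zero h)
          omega
        have hlen2 : r2.length + 1 ≤ q2.length := by
          have hspec := congrArg SimpleGraph.Walk.length (q2.take_spec ht2q)
          rw [SimpleGraph.Walk.length_append, ← hr2] at hspec
          have : (q2.takeUntil t2 ht2q).length ≠ 0 :=
            fun h => ht2v (SimpleGraph.Walk.eq_of_length_eq_zero h).symm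
          omega
        have hlen12 : q1.length + q2.length = p.length := by
          have hspec := congrArg SimpleGraph.Walk.length (p.take_spec hvp)
          rw [SimpleGraph.Walk.length_append] at hspec
          exact hspec
        have hr1sub : r1.support ⊆ p.support :=
          fun z hz => p.support_takeUntil_subset hvp
            (q1.support_takeUntil_subset ht1q hz)
        have hr2sub : r2.support ⊆ p.support :=
          fun z hz => p.support_dropUntil_subset hvp
            (q2.support_dropUntil_subset ht2q hz)
        by_cases hteq : t1 = t2
        · subst hteq
          set r := r1.append r2 with hr
          have hrsub : r.support ⊆ p.support := by
            intro z hz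
            rw [hr, SimpleGraph.Walk.support_append, List.mem_append] at hz
            rcases hz with hz | hz
            · exact hr1sub hz
            · exact hr2sub (List.mem_of_mem_tail hz)
          refine ih r.length ?_ r rfl (fun z hzS hzr => havoid z hzS (hrsub hzr))
          rw [hr, SimpleGraph.Walk.length_append]
          omega
        · set r := r1.append (SimpleGraph.Walk.cons (hTcl ht1T ht2T hteq) r2) with hr
          have hrsub : r.support ⊆ p.support := by
            intro z hz
            rw [hr, SimpleGraph.Walk.support_append, List.mem_append] at hz
            rcases hz with hz | hz
            · exact hr1sub hz
            · rw [SimpleGraph.Walk.support_cons, List.tail_cons] at hz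
              exact hr2sub hz
          refine ih r.length ?_ r rfl (fun z hzS hzr => havoid z hzS (hrsub hzr))
          rw [hr, SimpleGraph.Walk.length_append, SimpleGraph.Walk.length_cons]
          omega
  exact key p0.length p0 rfl hp0

/-- Every `c`-inseparable set is contained in a maximal one (finiteness). -/
lemma insep_extend [Fintype V] {G : SimpleGraph V} {c : ℕ} {A : Set V}
    (h : InsepSet G c A) : ∃ B, A ⊆ B ∧ MaxInsepSet G c B := by
  obtain ⟨B, ⟨hAB, hB⟩, hmax⟩ := Set.Finite.exists_maximalFor (id : Set V → Set V)
    {B | A ⊆ B ∧ InsepSet G c B} (Set.toFinite _) ⟨A, subset_rfl, h⟩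
  refine ⟨B, hAB, hB, fun B' hBB' hB' => ?_⟩
  exact le_antisymm (hmax ⟨hAB.trans hBB', hB'⟩ hBB') hBB'

theorem stmt1 [Fintype V] (G : SimpleGraph V) (c : ℕ) :
    (∀ A : Set V, AtomWithin G c A → InsepSet G c A) ∧
    (∀ A : Set V, MaxAtom G c A ↔ MaxInsepSet G c A) := by
  constructor
  · exact fun A h => atom_insep h
  · intro A
    constructor
    · rintro ⟨hatom, hmax⟩
      refine ⟨atom_insep hatom, fun B hAB hB => ?_⟩
      obtain ⟨B', hBB', hB'⟩ := insep_extend hB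
      have hB'A : B' = A := hmax B' (hAB.trans hBB') (maxInsep_atom hB')
      exact le_antisymm (hB'A ▸ hBB') hAB
    · rintro ⟨hins, hmax⟩
      refine ⟨maxInsep_atom ⟨hins, hmax⟩, fun B hAB hB => ?_⟩
      exact hmax B hAB (atom_insep hB)
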